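/- Let G be a Lie group with Lie algebra 𝔤 and β ∈ 𝔤. Then R^{β+} = {g ∈ G : lim_{t→-∞} exp(tβ) g exp(-tβ) = e} is a normal subgroup of G^{β+} = {g ∈ G : lim_{t→-∞} exp(tβ) g exp(-tβ) exists}. -/

import Mathlib

open Filter Topology

/-- With `φ : t ↦ exp(tβ)` the one-parameter subgroup generated by `β`, the set
`R^{β+} = {g : lim_{t→-∞} exp(tβ) g exp(-tβ) = e}` is a normal subgroup of
`G^{β+} = {g : lim_{t→-∞} exp(tβ) g exp(-tβ) exists}`: it is contained in `G^{β+}`,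
is a subgroup, and is stable under conjugation by elements of `G^{β+}`. -/
theorem Rbeta_plus_normal_in_Gbeta_plus
    {G : Type*} [Group G] [TopologicalSpace G] [IsTopologicalGroup G] [T2Space G]
    (φ : ℝ → G) (hφ : Continuous φ) (hφ0 : φ 0 = 1)
    (hφadd : ∀ s t : ℝ, φ (s + t) = φ s * φ t) :
    let S : Set G :=
      {g : G | ∃ L : G, Tendsto (fun t : ℝ => φ t * g * (φ t)⁻¹) atBot (𝓝 L)}
    let R : Set G :=
      {g : G | Tendsto (fun t : ℝ => φ t * g * (φ t)⁻¹) atBot (𝓝 (1 : G))}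
    R ⊆ S ∧ (1 : G) ∈ R ∧ (∀ a ∈ R, ∀ b ∈ R, a * b ∈ R) ∧ (∀ a ∈ R, a⁻¹ ∈ R) ∧
      (∀ g ∈ S, ∀ r ∈ R, g * r * g⁻¹ ∈ R) := by
  intro S R
  refine ⟨fun g hg => ⟨1, hg⟩, ?_, ?_, ?_, ?_⟩
  · show Tendsto (fun t : ℝ => φ t * (1:G) * (φ t)⁻¹) atBot (𝓝 1)
    exact (tendsto_const_nhds : Tendsto (fun _ : ℝ => (1:G)) atBot (𝓝 1)).congr
      (fun t => by group)
  · intro a ha b hb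
    show Tendsto (fun t : ℝ => φ t * (a * b) * (φ t)⁻¹) atBot (𝓝 1)
    have h := ha.mul hb
    rw [one_mul] at h
    exact h.congr (fun t => by group)
  · intro a ha
    show Tendsto (fun t : ℝ => φ t * a⁻¹ * (φ t)⁻¹) atBot (𝓝 1)
    have h := ha.inv
    rw [inv_one] at h
    exact h.congr (fun t => by group)
  · rintro g ⟨L, hL⟩ r hr
    show Tendsto (fun t : ℝ => φ t * (g * r * g⁻¹) * (φ t)⁻¹) atBot (𝓝 1)
    have h := (hL.mul hr).mul hL.inv
    rw [mul_one, mul_inv_cancel] at h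
    exact h.congr (fun t => by group)
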